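/- In a finite graph, if B is a minimum-cardinality set of edges whose deletion (equivalently negation) balances a signed graph Σ on a connected graph G, then G − B is connected; equivalently, if deleting a balancing set disconnects G then that balancing set is not minimal. -/
import Mathlib


/-- A signature is balanced when every closed walk has positive sign product. -/
def IsBalancedSig {V : Type*} (G : SimpleGraph V) (σ : Sym2 V → ℤˣ) : Prop :=
  ∀ (u : V) (w : G.Walk u u), (w.edges.map σ).prod = 1

/-- Negate the signs of the edges in `B`. -/
def negateFin {V : Type*} [DecidableEq V] (σ : Sym2 V → ℤˣ)
    (B : Finset (Sym2 V)) : Sym2 V → ℤˣ :=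
  fun e => if e ∈ B then -σ e else σ e

/-- The switching sign attached to an edge by a vertex signing `ς`. -/
def switchSign {V : Type*} (ς : V → ℤˣ) : Sym2 V → ℤˣ :=
  Sym2.lift ⟨fun x y => ς x * ς y, fun x y => mul_comm _ _⟩

lemma switchSign_mk {V : Type*} (ς : V → ℤˣ) (x y : V) :
    switchSign ς s(x, y) = ς x * ς y := rfl

lemma units_mul_neg_one_of_ne {x y : ℤˣ} (h : x ≠ y) : x * y = -1 := by
  rcases Int.units_eq_one_or x with hx | hx <;>
  rcases Int.units_eq_one_or y with hy | hy <;>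
  simp_all

/-- Telescoping: product of switching signs along a walk. -/
lemma switchSign_walk_prod {V : Type*} {G : SimpleGraph V} (ς : V → ℤˣ)
    {a b : V} (p : G.Walk a b) :
    (p.edges.map (switchSign ς)).prod = ς a * ς b := by
  induction p with
  | nil => simp [Int.units_mul_self]
  | @cons u v w h p ih =>
      rw [SimpleGraph.Walk.edges_cons, List.map_cons, List.prod_cons, ih,
        switchSign_mk]
      calc ς u * ς v * (ς v * ς w) = ς u * ((ς v * ς v) * ς w) := by
              rw [mul_assoc, mul_assoc]
        _ = ς u * ς w := by rw [Int.units_mul_self, one_mul]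

/-- If the signs at the two ends of a walk differ, some edge on the walk
has negative switching sign. -/
lemma exists_neg_switch_edge {V : Type*} {G : SimpleGraph V} (ς : V → ℤˣ)
    {a b : V} (p : G.Walk a b) (hab : ς a ≠ ς b) :
    ∃ e ∈ p.edges, switchSign ς e = -1 := by
  induction p with
  | nil => exact absurd rfl hab
  | @cons u v w h p ih =>
      by_cases huv : ς u = ς v
      · obtain ⟨e, he, hne⟩ := ih (huv ▸ hab)
        exact ⟨e, by simp [he], hne⟩
      · refine ⟨s(u, v), by simp, ?_⟩
        rw [switchSign_mk]
        exact units_mul_neg_one_of_ne huv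

/-- Deleting a minimum-cardinality balancing set leaves a connected signed
graph connected; equivalently, if deleting a balancing set disconnects the
graph then it is not minimal. -/
theorem minimal_balancing_set_leaves_connected {V : Type*} [Fintype V]
    [DecidableEq V] (G : SimpleGraph V) (hG : G.Connected) (σ : Sym2 V → ℤˣ)
    (B : Finset (Sym2 V)) (hBsub : ↑B ⊆ G.edgeSet)
    (hbal : IsBalancedSig G (negateFin σ B))
    (hmin : ∀ B' : Finset (Sym2 V), ↑B' ⊆ G.edgeSet →
      IsBalancedSig G (negateFin σ B') → B.card ≤ B'.card) :
    (G.deleteEdges ↑B).Connected := by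
  classical
  set G' := G.deleteEdges (↑B : Set (Sym2 V)) with hG'
  rw [SimpleGraph.connected_iff]
  refine ⟨?_, hG.nonempty⟩
  intro u₀ v₀
  by_contra hreach
  -- the switching function: -1 on the component of u₀, 1 elsewhere
  set ς : V → ℤˣ := fun x => if G'.Reachable u₀ x then -1 else 1 with hς
  set τ : Sym2 V → ℤˣ := switchSign ς with hτ
  -- edges of G with negative switching sign lie in B
  have hA : ∀ e ∈ G.edgeSet, τ e = -1 → e ∈ B := by
    intro e
    induction e with
    | _ x y =>
      intro hxy hneg
      by_contra hB
      have hadj : G'.Adj x y := by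
        rw [hG', SimpleGraph.deleteEdges_adj]
        exact ⟨hxy, by simpa using hB⟩
      have hiff : G'.Reachable u₀ x ↔ G'.Reachable u₀ y :=
        ⟨fun h => h.trans hadj.reachable, fun h => h.trans hadj.symm.reachable⟩
      have : ς x = ς y := by
        by_cases h : G'.Reachable u₀ x
        · simp [hς, h, hiff.mp h]
        · simp [hς, h, mt hiff.mpr h]
      rw [hτ, switchSign_mk, this, Int.units_mul_self] at hneg
      exact absurd hneg (by decide)
  -- the smaller balancing set
  set B' : Finset (Sym2 V) := B.filter (fun e => τ e = 1) with hB'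
  have hB'sub : (↑B' : Set (Sym2 V)) ⊆ G.edgeSet :=
    Set.Subset.trans (by exact_mod_cast Finset.filter_subset _ B) hBsub
  -- pointwise relation on edges of G
  have hpt : ∀ e ∈ G.edgeSet, negateFin σ B' e = τ e * negateFin σ B e := by
    intro e he
    rcases Int.units_eq_one_or (τ e) with h1 | h1
    · have : e ∈ B' ↔ e ∈ B := by simp [hB', h1]
      simp only [negateFin, h1, one_mul]
      by_cases hB : e ∈ B <;> simp [this, hB]
    · have heB : e ∈ B := hA e he h1
      have heB' : e ∉ B' := by simp [hB', h1]
      simp [negateFin, heB, heB', h1]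
  -- B' is balancing
  have hbal' : IsBalancedSig G (negateFin σ B') := by
    intro u w
    have hmap : w.edges.map (negateFin σ B') =
        w.edges.map (fun e => τ e * negateFin σ B e) :=
      List.map_congr_left fun e he => hpt e (w.edges_subset_edgeSet he)
    rw [hmap, List.prod_map_mul, hτ, switchSign_walk_prod, Int.units_mul_self,
      one_mul, hbal u w]
  -- a crossing edge exists, so B' ⊊ B
  have hςu : ς u₀ = -1 := by simp [hς, SimpleGraph.Reachable.refl]
  have hςv : ς v₀ = 1 := by simp [hς, hreach]
  obtain ⟨e₀, he₀w, he₀neg⟩ := exists_neg_switch_edge ς (hG u₀ v₀).some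
    (by rw [hςu, hςv]; decide)
  have he₀B : e₀ ∈ B := hA e₀ ((hG u₀ v₀).some.edges_subset_edgeSet he₀w) he₀neg
  have he₀B' : e₀ ∉ B' := by
    rw [hB', Finset.mem_filter]
    rintro ⟨-, h1⟩
    rw [hτ] at h1
    exact absurd (he₀neg.symm.trans h1) (by decide)
  have hlt : B'.card < B.card :=
    Finset.card_lt_card ⟨Finset.filter_subset _ B, fun h => he₀B' (h he₀B)⟩
  exact absurd (hmin B' hB'sub hbal') (not_le.mpr hlt)
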